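/- Let G be a hereditarily collectionwise Hausdorff paratopological group with a suitable set S and let H be a sequentially dense subgroup of G. Then H has a suitable set of size at most |S| · ℵ₀. -/

import Mathlib

def IsSuitable {G : Type*} [Group G] [TopologicalSpace G] (S : Set G) : Prop :=
  DiscreteTopology S ∧ IsClosed (S ∪ {1}) ∧ Dense (Subgroup.closure S : Set G)

/-- A space is collectionwise Hausdorff if every closed discrete subset `D` is strongly
discrete: the points of `D` can be separated by a discrete family of open sets. -/
def CollectionwiseHausdorff (X : Type*) [TopologicalSpace X] : Prop :=
  ∀ D : Set X, IsClosed D → DiscreteTopology D →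
    ∃ U : D → Set X, (∀ x : D, IsOpen (U x) ∧ (x : X) ∈ U x) ∧
      ∀ y : X, ∃ V ∈ nhds y, {x : D | (U x ∩ V).Nonempty}.Subsingleton

def HereditarilyCollectionwiseHausdorff (X : Type*) [TopologicalSpace X] : Prop :=
  ∀ Y : Set X, CollectionwiseHausdorff Y

/-- Every point of `X` is a limit of a sequence of points of `D`. -/
def SeqDense {X : Type*} [TopologicalSpace X] (D : Set X) : Prop :=
  ∀ x : X, ∃ u : ℕ → X, (∀ n, u n ∈ D) ∧ Filter.Tendsto u Filter.atTop (nhds x)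

theorem discrete_of_sep {X : Type*} [TopologicalSpace X] {A : Set X}
    (h : ∀ a : A, ∃ O : Set X, IsOpen O ∧ (a : X) ∈ O ∧ ∀ b : A, (b : X) ∈ O → b = a) :
    DiscreteTopology A := by
  rw [discreteTopology_iff_isOpen_singleton]
  intro a
  obtain ⟨O, hO, haO, hsep⟩ := h a
  have he : {a} = Subtype.val ⁻¹' O := by
    ext b
    exact ⟨fun hb => by rw [Set.mem_singleton_iff] at hb; rw [hb]; exact haO,
      fun hb => hsep b hb⟩
  rw [he]
  exact hO.preimage continuous_subtype_val

theorem eventually_ne_of_tendsto {G : Type*} [TopologicalSpace G] [T1Space G] {u : ℕ → G}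
    {l c : G} (hu : Filter.Tendsto u Filter.atTop (nhds l)) (hc : c ≠ l) :
    ∀ᶠ n in Filter.atTop, u n ≠ c := by
  by_contra h
  rw [Filter.not_eventually] at h
  have hfreq : ∃ᶠ n in Filter.atTop, u n ∈ ({c} : Set G) := by simpa using h
  have hl := mem_closure_of_frequently_of_tendsto hfreq hu
  rw [closure_singleton] at hl
  exact hc (Set.mem_singleton_iff.mp hl).symm

/-- The key "machine": in a hereditarily collectionwise Hausdorff T1 space, a tail of a
convergent sequence accumulates only at the limit. -/
theorem tail_isolated {G : Type*} [TopologicalSpace G] [T1Space G]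
    (hG : HereditarilyCollectionwiseHausdorff G)
    {u : ℕ → G} {l : G} (hu : Filter.Tendsto u Filter.atTop (nhds l)) (N : ℕ)
    {y : G} (hy : y ≠ l) : y ∉ closure (u '' Set.Ici N \ {y}) := by
  intro hmem
  set A : Set G := u '' Set.Ici N \ {y} with hA
  set Z : Set G := A ∪ {l, y} with hZ
  have hlZ : l ∈ Z := Or.inr (Or.inl rfl)
  have hyZ : y ∈ Z := Or.inr (Or.inr rfl)
  set D : Set ↥Z := {z | (z : G) = l ∨ (z : G) = y} with hD
  have hDclosed : IsClosed D := by
    have he : D = Subtype.val ⁻¹' ({l, y} : Set G) := by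
      ext z; simp [hD, Set.mem_insert_iff]
    rw [he]
    exact (Set.Finite.isClosed (by simp : ({l, y} : Set G).Finite)).preimage
      continuous_subtype_val
  have hDdisc : DiscreteTopology ↥D := by
    apply discrete_of_sep
    intro d
    rcases d.2 with hd | hd
    · refine ⟨Subtype.val ⁻¹' ({y}ᶜ : Set G), isClosed_singleton.isOpen_compl.preimage
        continuous_subtype_val, ?_, ?_⟩
      · show ((d : ↥Z) : G) ∈ ({y}ᶜ : Set G)
        rw [hd]
        exact fun h => hy (Set.mem_singleton_iff.mp h).symm
      · intro b hb
        rcases b.2 with hb' | hb'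
        · apply Subtype.ext; apply Subtype.ext; rw [hb', hd]
        · exact absurd hb' hb
    · refine ⟨Subtype.val ⁻¹' ({l}ᶜ : Set G), isClosed_singleton.isOpen_compl.preimage
        continuous_subtype_val, ?_, ?_⟩
      · show ((d : ↥Z) : G) ∈ ({l}ᶜ : Set G)
        rw [hd]
        exact fun h => hy (Set.mem_singleton_iff.mp h)
      · intro b hb
        rcases b.2 with hb' | hb'
        · exact absurd hb' hb
        · apply Subtype.ext; apply Subtype.ext; rw [hb', hd]
  obtain ⟨U, hU, hsep⟩ := hG Z D hDclosed hDdisc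
  set zl : ↥Z := ⟨l, hlZ⟩ with hzl
  set zy : ↥Z := ⟨y, hyZ⟩ with hzy
  set dl : ↥D := ⟨zl, Or.inl rfl⟩ with hdl
  set dy : ↥D := ⟨zy, Or.inr rfl⟩ with hdy
  obtain ⟨V, hV, hss⟩ := hsep zy
  obtain ⟨O₀, hO₀open, hO₀eq⟩ := isOpen_induced_iff.mp (hU dl).1
  have hlO₀ : l ∈ O₀ := by
    have h2 := (hU dl).2
    rw [← hO₀eq] at h2
    exact h2
  rw [nhds_induced] at hV
  obtain ⟨V₀', hV₀', hV₀'sub⟩ := Filter.mem_comap.mp hV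
  obtain ⟨V₀, hsubV, hV₀open, hyV₀⟩ := mem_nhds_iff.mp hV₀'
  have hdis : ∀ g : G, g ∈ O₀ → g ∈ V₀ → g ∈ Z → False := by
    intro g hgO hgV hgZ
    have h1 : dl ∈ {x : ↥D | (U x ∩ V).Nonempty} := by
      refine ⟨⟨g, hgZ⟩, ?_, hV₀'sub (hsubV hgV)⟩
      rw [← hO₀eq]
      exact hgO
    have h2 : dy ∈ {x : ↥D | (U x ∩ V).Nonempty} := by
      exact ⟨zy, (hU dy).2, hV₀'sub (hsubV hyV₀)⟩
    have h3 := hss h1 h2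
    have h4 : l = y := congrArg (fun x : ↥D => ((x : ↥Z) : G)) h3
    exact hy h4.symm
  obtain ⟨N₁, hN₁⟩ := Filter.eventually_atTop.mp (hu (hO₀open.mem_nhds hlO₀))
  set F : Set G := u '' Set.Ico N N₁ with hF
  have hVA : V₀ ∩ A ⊆ F := by
    rintro g ⟨hgV, hgA⟩
    by_cases hgO : g ∈ O₀
    · exact absurd (hdis g hgO hgV (Or.inl hgA)) (by simp)
    · obtain ⟨⟨n, hn, rfl⟩, _⟩ := hgA
      refine ⟨n, ⟨hn, ?_⟩, rfl⟩
      by_contra hlt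
      exact hgO (hN₁ n (le_of_not_gt hlt))
  have hFfin : (F \ {y}).Finite := ((Set.finite_Ico N N₁).image u).subset Set.diff_subset
  have hopen : IsOpen (V₀ \ (F \ {y})) := hV₀open.sdiff hFfin.isClosed
  have hyin : y ∈ V₀ \ (F \ {y}) := ⟨hyV₀, fun h => h.2 rfl⟩
  obtain ⟨g, hgVF, hgA⟩ := mem_closure_iff.mp hmem _ hopen hyin
  have hgy : g ≠ y := fun h => hgA.2 (h ▸ rfl)
  exact hgVF.2 ⟨hVA ⟨hgVF.1, hgA⟩, hgy⟩


theorem iso_of_discrete {G : Type*} [TopologicalSpace G] {S : Set G}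
    (hSdisc : DiscreteTopology S) :
    ∀ z ∈ S, ∃ O : Set G, IsOpen O ∧ z ∈ O ∧ ∀ w ∈ S, w ∈ O → w = z := by
  intro z hz
  have hop : IsOpen ({⟨z, hz⟩} : Set ↥S) := isOpen_discrete _
  obtain ⟨O, hOopen, hOeq⟩ := isOpen_induced_iff.mp hop
  refine ⟨O, hOopen, ?_, ?_⟩
  · have h1 : (⟨z, hz⟩ : ↥S) ∈ ({⟨z, hz⟩} : Set ↥S) := rfl
    rw [← hOeq] at h1; exact h1
  · intro w hw hwO
    have h1 : (⟨w, hw⟩ : ↥S) ∈ Subtype.val ⁻¹' O := hwO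
    rw [hOeq] at h1
    exact congrArg Subtype.val h1

theorem deg_case {G : Type*} [Group G] [TopologicalSpace G] [ContinuousMul G]
    (S : Set G) (hS : IsSuitable S)
    (H : Subgroup G)
    (c : G) (hcC : c ∈ closure ({1} : Set G)) (hc1' : c ≠ 1) :
    ∃ T : Set H, IsSuitable T ∧ Cardinal.mk T ≤ Cardinal.mk S * Cardinal.aleph0 := by
  classical
  obtain ⟨hSdisc, hSclosed, hSdense⟩ := hS
  have hCS : closure ({1} : Set G) ⊆ S ∪ {1} := by
    have h := closure_mono (show ({1}:Set G) ⊆ S ∪ {1} from fun g hg => Or.inr hg)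
    rwa [hSclosed.closure_eq] at h
  have hcS : c ∈ S := by
    rcases hCS hcC with h | h
    · exact h
    · exact absurd h hc1'
  have hmulc : ∀ a : G, a * c ∈ closure ({a} : Set G) := by
    intro a
    have h := map_mem_closure (f := fun g => a * g) (t := ({a} : Set G))
      (continuous_const.mul continuous_id) hcC
      (fun w hw => by rw [Set.mem_singleton_iff] at hw; simp [hw])
    simpa using h
  have hKdeg : ∀ a ∈ S, a * c = 1 := by
    intro a ha
    have hac : a * c ∈ S ∪ {1} := by
      have h2 : closure ({a} : Set G) ⊆ S ∪ {1} := by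
        have h := closure_mono (show ({a}:Set G) ⊆ S ∪ {1} from by
          intro w hw; rw [Set.mem_singleton_iff] at hw; exact Or.inl (hw ▸ ha))
        rwa [hSclosed.closure_eq] at h
      exact h2 (hmulc a)
    rcases hac with hac | hac
    · exfalso
      obtain ⟨O, hOopen, hacO, hOsep⟩ := iso_of_discrete hSdisc _ hac
      obtain ⟨w, hwO, hwa⟩ := mem_closure_iff.mp (hmulc a) O hOopen hacO
      rw [Set.mem_singleton_iff] at hwa
      subst hwa
      have h3 := hOsep _ ha hwO
      have h4 : w * 1 = w * c := by rw [mul_one]; exact h3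
      exact hc1' (mul_left_cancel h4).symm
    · exact hac
  have hcc : c * c = 1 := hKdeg c hcS
  have hcinv : c⁻¹ = c := inv_eq_of_mul_eq_one_right hcc
  have hSc : S = {c} := by
    apply Set.eq_singleton_iff_unique_mem.mpr
    refine ⟨hcS, fun a ha => ?_⟩
    have h := hKdeg a ha
    exact mul_right_cancel (h.trans hcc.symm)
  have hG2 : ∀ g : G, g = 1 ∨ g = c := by
    intro g
    have hg : g ∈ closure (↑(Subgroup.closure S) : Set G) := by
      rw [hSdense.closure_eq]; trivial
    have hsub : (↑(Subgroup.closure S) : Set G) ⊆ {1, c} := by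
      intro z hz
      rw [SetLike.mem_coe] at hz
      refine Subgroup.closure_induction ?_ ?_ ?_ ?_ hz
      · intro w hw
        rw [hSc, Set.mem_singleton_iff] at hw
        exact Or.inr hw
      · exact Or.inl rfl
      · rintro w v _ _ hw hv
        rcases hw with rfl | rfl <;> rcases hv with rfl | rfl <;>
          simp [hcc]
      · rintro w _ hw
        rcases hw with rfl | rfl
        · exact Or.inl inv_one
        · exact Or.inr hcinv
    have hcl : closure ({1, c} : Set G) ⊆ {1, c} := by
      rw [show ({1, c} : Set G) = {1} ∪ {c} from rfl, closure_union]
      rintro z (hz | hz)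
      · rcases hCS hz with h | h
        · rw [hSc, Set.mem_singleton_iff] at h
          exact Or.inr h
        · exact Or.inl h
      · have h2 : c * z ∈ closure ({1} : Set G) := by
          have h := map_mem_closure (f := fun g => c * g) (t := ({1} : Set G))
            (continuous_const.mul continuous_id) hz
            (fun w hw => by rw [Set.mem_singleton_iff] at hw; simp [hw, hcc])
          simpa using h
        rcases hCS h2 with h3 | h3
        · rw [hSc, Set.mem_singleton_iff] at h3
          left
          have h4 : c * z = c * 1 := by rw [mul_one]; exact h3
          exact mul_left_cancel h4
        · rw [Set.mem_singleton_iff] at h3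
          right
          exact mul_left_cancel (h3.trans hcc.symm)
    have h5 := hcl (closure_mono hsub hg)
    rcases h5 with h5 | h5
    · exact Or.inl h5
    · exact Or.inr h5
  by_cases hcH : c ∈ H
  · refine ⟨{⟨c, hcH⟩}, ⟨?_, ?_, ?_⟩, ?_⟩
    · apply discrete_of_sep
      intro a
      refine ⟨Set.univ, isOpen_univ, trivial, fun b _ => ?_⟩
      have h1 := a.2
      have h2 := b.2
      rw [Set.mem_singleton_iff] at h1 h2
      apply Subtype.ext
      rw [h1, h2]
    · have he : ({⟨c, hcH⟩} ∪ {1} : Set ↥H) = Set.univ := by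
        ext h
        simp only [Set.mem_univ, iff_true]
        rcases hG2 (h : G) with h1 | h1
        · exact Or.inr (Subtype.ext h1)
        · exact Or.inl (Subtype.ext h1)
      rw [he]; exact isClosed_univ
    · intro x
      apply subset_closure
      rcases hG2 (x : G) with h1 | h1
      · have h2 : x = 1 := Subtype.ext h1
        rw [h2]; exact SetLike.mem_coe.mpr (one_mem _)
      · have h2 : x = ⟨c, hcH⟩ := Subtype.ext h1
        rw [h2]
        exact SetLike.mem_coe.mpr (Subgroup.subset_closure rfl)
    · have h1 : Cardinal.mk ↥({(⟨c, hcH⟩ : ↥H)} : Set ↥H) = 1 := Cardinal.mk_singleton _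
      rw [h1]
      have h2 : (1:Cardinal) ≤ Cardinal.mk ↥S :=
        Cardinal.one_le_iff_ne_zero.mpr (Cardinal.mk_ne_zero_iff.mpr ⟨⟨c, hcS⟩⟩)
      calc (1:Cardinal) = 1 * 1 := (one_mul 1).symm
        _ ≤ Cardinal.mk ↥S * Cardinal.aleph0 := mul_le_mul' h2 Cardinal.one_le_aleph0
  · have hH1 : ∀ h : ↥H, (h : G) = 1 := by
      intro h
      rcases hG2 (h:G) with h1 | h1
      · exact h1
      · exact absurd (h1 ▸ h.2) hcH
    refine ⟨∅, ⟨?_, ?_, ?_⟩, ?_⟩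
    · apply discrete_of_sep
      rintro ⟨a, ha⟩
      exact absurd ha (Set.notMem_empty a)
    · have he : (∅ ∪ {1} : Set ↥H) = Set.univ := by
        ext h
        simp only [Set.empty_union, Set.mem_singleton_iff, Set.mem_univ, iff_true]
        exact Subtype.ext (hH1 h)
      rw [he]; exact isClosed_univ
    · intro x
      apply subset_closure
      have h2 : x = 1 := Subtype.ext (hH1 x)
      rw [h2]; exact SetLike.mem_coe.mpr (one_mem _)
    · have h1 : Cardinal.mk ↥(∅ : Set ↥H) = 0 := Cardinal.mk_emptyCollection _
      rw [h1]
      exact zero_le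

open Filter Set

theorem main_case {G : Type*} [Group G] [TopologicalSpace G] [ContinuousMul G]
    (hG : HereditarilyCollectionwiseHausdorff G)
    (S : Set G) (hS : IsSuitable S)
    (H : Subgroup G) (hH : SeqDense (H : Set G))
    (hC : closure ({1} : Set G) ⊆ {1}) :
    ∃ T : Set H, IsSuitable T ∧ Cardinal.mk T ≤ Cardinal.mk S * Cardinal.aleph0 := by
  classical
  obtain ⟨hSdisc, hSclosed, hSdense⟩ := hS
  have h1H : (1 : G) ∈ H := H.one_mem
  haveI : T1Space G := by
    refine ⟨fun x => ?_⟩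
    apply isClosed_of_closure_subset
    intro z hz
    have h2 : x⁻¹ * z ∈ closure ({1} : Set G) := by
      have h := map_mem_closure (f := fun g => x⁻¹ * g) (t := ({1} : Set G))
        (continuous_const.mul continuous_id) hz
        (fun w hw => by rw [Set.mem_singleton_iff] at hw; simp [hw])
      simpa using h
    have h3 := hC h2
    rw [Set.mem_singleton_iff] at h3 ⊢
    exact (inv_mul_eq_one.mp h3).symm
  -- the ambient subspace Y = G \ {1} and the closed discrete set D = S \ {1}
  set Y : Set G := {g : G | g ≠ 1} with hY
  set D : Set ↥Y := {z : ↥Y | (z : G) ∈ S} with hD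
  have hDclosed : IsClosed D := by
    have he : D = Subtype.val ⁻¹' (S ∪ {1}) := by
      ext z
      constructor
      · exact fun hz => Or.inl hz
      · rintro (hz | hz)
        · exact hz
        · exact absurd hz z.2
    rw [he]
    exact hSclosed.preimage continuous_subtype_val
  have hDdisc : DiscreteTopology ↥D := by
    apply discrete_of_sep
    intro d
    obtain ⟨O, hOopen, hdO, hOsep⟩ := iso_of_discrete hSdisc _ d.2
    refine ⟨Subtype.val ⁻¹' O, hOopen.preimage continuous_subtype_val, hdO, ?_⟩
    intro bb hbb
    exact Subtype.ext (Subtype.ext (hOsep _ bb.2 hbb))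
  obtain ⟨U, hU, hsep⟩ := hG Y D hDclosed hDdisc
  choose O hOopen hOeq using fun x : ↥D => isOpen_induced_iff.mp (hU x).1
  have hOmem : ∀ x : ↥D, ((x : ↥Y) : G) ∈ O x := by
    intro x
    have h := (hU x).2
    rw [← hOeq x] at h
    exact h
  -- the index set of points of S outside H
  set J := {g : G // g ∈ S ∧ g ∉ H} with hJ
  have hJne1 : ∀ j : J, (j : G) ≠ 1 := fun j h => j.2.2 (h ▸ h1H)
  set xD : J → ↥D := fun j => ⟨⟨(j : G), hJne1 j⟩, j.2.1⟩ with hxD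
  choose a haH haT using fun j : J => hH (j : G)
  choose b hbH hbT using fun j : J => hH ((j : G)⁻¹)
  set ρ : J → ℕ → G := fun j n => a j n * b j n * a j n with hρ
  have hρT : ∀ j : J, Tendsto (ρ j) atTop (nhds (j : G)) := by
    intro j
    have h := ((haT j).mul (hbT j)).mul (haT j)
    simpa using h
  have hρH : ∀ (j : J) (n : ℕ), ρ j n ∈ H := fun j n =>
    H.mul_mem (H.mul_mem (haH j n) (hbH j n)) (haH j n)
  have hev : ∀ j : J, ∃ Nj : ℕ, ∀ n ≥ Nj,
      (a j n ∈ O (xD j) ∧ a j n ≠ 1) ∧ (ρ j n ∈ O (xD j) ∧ ρ j n ≠ 1) := by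
    intro j
    apply Filter.eventually_atTop.mp
    have h1 : ∀ᶠ n in atTop, a j n ∈ O (xD j) :=
      haT j ((hOopen (xD j)).mem_nhds (hOmem (xD j)))
    have h2 : ∀ᶠ n in atTop, ρ j n ∈ O (xD j) :=
      hρT j ((hOopen (xD j)).mem_nhds (hOmem (xD j)))
    have h3 : ∀ᶠ n in atTop, a j n ≠ 1 :=
      eventually_ne_of_tendsto (haT j) (Ne.symm (hJne1 j))
    have h4 : ∀ᶠ n in atTop, ρ j n ≠ 1 :=
      eventually_ne_of_tendsto (hρT j) (Ne.symm (hJne1 j))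
    filter_upwards [h1, h2, h3, h4] with n g1 g2 g3 g4
    exact ⟨⟨g1, g3⟩, ⟨g2, g4⟩⟩
  choose N hN using hev
  set tails : J → Set G := fun j => a j '' Set.Ici (N j) ∪ ρ j '' Set.Ici (N j) with htails
  set T : Set G := {g : G | g ∈ S ∧ g ∈ H ∧ g ≠ 1} ∪ ⋃ j : J, tails j with hT
  -- basic facts about T
  have hTH : ∀ g ∈ T, g ∈ H := by
    rintro g (⟨_, hgH, _⟩ | hg)
    · exact hgH
    · obtain ⟨j, hj⟩ := Set.mem_iUnion.mp hg
      rcases hj with ⟨n, _, rfl⟩ | ⟨n, _, rfl⟩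
      · exact haH j n
      · exact hρH j n
  have hTne1 : ∀ g ∈ T, g ≠ 1 := by
    rintro g (⟨_, _, hg1⟩ | hg)
    · exact hg1
    · obtain ⟨j, hj⟩ := Set.mem_iUnion.mp hg
      rcases hj with ⟨n, hn, rfl⟩ | ⟨n, hn, rfl⟩
      · exact ((hN j n hn).1).2
      · exact ((hN j n hn).2).2
  -- the "piece" associated to a point of D
  set fp : ↥D → Set G := fun x =>
    if h : ((x : ↥Y) : G) ∈ H then {((x : ↥Y) : G)} else tails ⟨((x : ↥Y) : G), x.2, h⟩
    with hfp
  have hfp_pos : ∀ (x : ↥D) (h : ((x : ↥Y) : G) ∈ H), fp x = {((x : ↥Y) : G)} := by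
    intro x h
    simp only [hfp]
    rw [dif_pos h]
  have hfp_neg : ∀ (x : ↥D) (h : ((x : ↥Y) : G) ∉ H),
      fp x = tails ⟨((x : ↥Y) : G), x.2, h⟩ := by
    intro x h
    simp only [hfp]
    rw [dif_neg h]
  have hassign : ∀ g ∈ T, ∃ x : ↥D, g ∈ fp x ∧ g ∈ O x := by
    rintro g (⟨hgS, hgH, hg1⟩ | hg)
    · refine ⟨⟨⟨g, hg1⟩, hgS⟩, ?_, hOmem _⟩
      rw [hfp_pos _ hgH]
      exact rfl
    · obtain ⟨j, hj⟩ := Set.mem_iUnion.mp hg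
      refine ⟨xD j, ?_, ?_⟩
      · rw [hfp_neg (xD j) j.2.2]
        exact hj
      · rcases hj with ⟨n, hn, rfl⟩ | ⟨n, hn, rfl⟩
        · exact ((hN j n hn).1).1
        · exact ((hN j n hn).2).1
  have hfpT : ∀ x : ↥D, fp x ⊆ T := by
    intro x g hg
    by_cases hxH : ((x : ↥Y) : G) ∈ H
    · rw [hfp_pos _ hxH, Set.mem_singleton_iff] at hg
      exact Or.inl (hg ▸ ⟨x.2, hxH, (x : ↥Y).2⟩)
    · rw [hfp_neg _ hxH] at hg
      exact Or.inr (Set.mem_iUnion.mpr ⟨_, hg⟩)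
  have hK5 : ∀ (x : ↥D) (g : G), g ∈ closure (fp x) → g ∈ fp x ∨ g = ((x : ↥Y) : G) := by
    have htail : ∀ (u : ℕ → G) (l : G), Tendsto u atTop (nhds l) → ∀ (M : ℕ) (g : G),
        g ∈ closure (u '' Set.Ici M) → g ∈ u '' Set.Ici M ∨ g = l := by
      intro u l hu M g hg
      by_cases h1 : g = l
      · exact Or.inr h1
      by_cases h2 : g ∈ u '' Set.Ici M
      · exact Or.inl h2
      exfalso
      refine tail_isolated hG hu M h1 ?_
      rwa [Set.diff_singleton_eq_self h2]
    intro x g hg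
    by_cases hxH : ((x : ↥Y) : G) ∈ H
    · rw [hfp_pos _ hxH, closure_singleton] at hg
      exact Or.inr hg
    · rw [hfp_neg _ hxH] at hg ⊢
      set j : J := ⟨((x : ↥Y) : G), x.2, hxH⟩ with hj
      rw [htails, closure_union] at hg
      rcases hg with hg | hg
      · rcases htail (a j) _ (haT j) (N j) g hg with h | h
        · exact Or.inl (Or.inl h)
        · exact Or.inr h
      · rcases htail (ρ j) _ (hρT j) (N j) g hg with h | h
        · exact Or.inl (Or.inr h)
        · exact Or.inr h
  -- localization via collectionwise Hausdorffness
  have hloc : ∀ y : G, y ≠ 1 →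
      ∃ V₁ : Set G, IsOpen V₁ ∧ y ∈ V₁ ∧ (T ∩ V₁ = ∅ ∨ ∃ x : ↥D, T ∩ V₁ ⊆ fp x) := by
    intro y hy
    obtain ⟨V, hV, hss⟩ := hsep ⟨y, hy⟩
    rw [nhds_induced] at hV
    obtain ⟨V₀, hV₀, hV₀sub⟩ := Filter.mem_comap.mp hV
    obtain ⟨V₁, hsubV, hV₁open, hyV₁⟩ := mem_nhds_iff.mp hV₀
    refine ⟨V₁, hV₁open, hyV₁, ?_⟩
    by_cases hE : T ∩ V₁ = ∅
    · exact Or.inl hE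
    right
    obtain ⟨t₀, ht₀T, ht₀V⟩ := Set.nonempty_iff_ne_empty.mpr hE
    obtain ⟨x₀, hx₀fp, hx₀O⟩ := hassign t₀ ht₀T
    have hhit : ∀ g ∈ T, g ∈ V₁ → ∀ x : ↥D, g ∈ O x →
        x ∈ {x : ↥D | (U x ∩ V).Nonempty} := by
      intro g hgT hgV x hgO
      refine ⟨⟨g, hTne1 g hgT⟩, ?_, hV₀sub (hsubV hgV)⟩
      rw [← hOeq x]
      exact hgO
    refine ⟨x₀, ?_⟩
    rintro g ⟨hgT, hgV⟩
    obtain ⟨x, hxfp, hxO⟩ := hassign g hgT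
    have hxx : x = x₀ := hss (hhit g hgT hgV x hxO) (hhit t₀ ht₀T ht₀V x₀ hx₀O)
    rw [← hxx]
    exact hxfp
  -- closedness of T inside H
  have hclT : ∀ g ∈ closure T, g ∈ (H : Set G) → g ∈ T ∪ {1} := by
    intro g hgcl hgH
    by_cases hg1 : g = 1
    · exact Or.inr hg1
    left
    obtain ⟨V₁, hV₁o, hgV₁, hcase⟩ := hloc g hg1
    have hgc2 : g ∈ closure (T ∩ V₁) := by
      rw [mem_closure_iff] at hgcl ⊢
      intro o ho hgo
      obtain ⟨z, hz, hzT⟩ := hgcl (o ∩ V₁) (ho.inter hV₁o) ⟨hgo, hgV₁⟩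
      exact ⟨z, hz.1, hzT, hz.2⟩
    rcases hcase with hE | ⟨x, hsubfp⟩
    · rw [hE] at hgc2
      simp at hgc2
    have hgc3 := closure_mono hsubfp hgc2
    rcases hK5 x g hgc3 with h | h
    · exact hfpT x h
    · by_cases hxH : ((x : ↥Y) : G) ∈ H
      · apply hfpT x
        rw [hfp_pos _ hxH, h]
        exact rfl
      · exact absurd (h ▸ hgH) hxH
  -- discreteness of T
  have hdiscT : ∀ t ∈ T, ∃ W : Set G, IsOpen W ∧ t ∈ W ∧ ∀ g ∈ T, g ∈ W → g = t := by
    intro t htT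
    obtain ⟨V₁, hV₁o, htV₁, hcase⟩ := hloc t (hTne1 t htT)
    rcases hcase with hE | ⟨x, hsubfp⟩
    · exact absurd (Set.mem_inter htT htV₁) (hE ▸ Set.notMem_empty t)
    by_cases hxH : ((x : ↥Y) : G) ∈ H
    · have hts : t = ((x : ↥Y) : G) := by
        have h := hsubfp ⟨htT, htV₁⟩
        rwa [hfp_pos _ hxH, Set.mem_singleton_iff] at h
      refine ⟨V₁, hV₁o, htV₁, fun g hgT hgW => ?_⟩
      have h := hsubfp ⟨hgT, hgW⟩
      rw [hfp_pos _ hxH, Set.mem_singleton_iff] at h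
      rw [h, ← hts]
    · set j : J := ⟨((x : ↥Y) : G), x.2, hxH⟩ with hj
      have htne : t ≠ (j : G) := fun h => hxH (h ▸ hTH t htT)
      have h1 : t ∉ closure (a j '' Set.Ici (N j) \ {t}) := tail_isolated hG (haT j) _ htne
      have h2 : t ∉ closure (ρ j '' Set.Ici (N j) \ {t}) := tail_isolated hG (hρT j) _ htne
      refine ⟨V₁ \ (closure (a j '' Set.Ici (N j) \ {t}) ∪ closure (ρ j '' Set.Ici (N j) \ {t})),
        hV₁o.sdiff (isClosed_closure.union isClosed_closure), ⟨htV₁, ?_⟩, ?_⟩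
      · rintro (h | h)
        · exact h1 h
        · exact h2 h
      · rintro g hgT ⟨hgV₁, hgn⟩
        by_contra hne
        have hgfp : g ∈ tails j := by
          have h := hsubfp ⟨hgT, hgV₁⟩
          rwa [hfp_neg _ hxH] at h
        rcases hgfp with h | h
        · exact hgn (Or.inl (subset_closure ⟨h, hne⟩))
        · exact hgn (Or.inr (subset_closure ⟨h, hne⟩))
  -- membership of b-sequences in the generated subgroup
  have haTm : ∀ (j : J), ∀ n ≥ N j, a j n ∈ Subgroup.closure T := by
    intro j n hn
    exact Subgroup.subset_closure (Or.inr (Set.mem_iUnion.mpr ⟨j, Or.inl ⟨n, hn, rfl⟩⟩))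
  have hρTm : ∀ (j : J), ∀ n ≥ N j, ρ j n ∈ Subgroup.closure T := by
    intro j n hn
    exact Subgroup.subset_closure (Or.inr (Set.mem_iUnion.mpr ⟨j, Or.inr ⟨n, hn, rfl⟩⟩))
  have hbTm : ∀ (j : J), ∀ n ≥ N j, b j n ∈ Subgroup.closure T := by
    intro j n hn
    have hb : b j n = (a j n)⁻¹ * ρ j n * (a j n)⁻¹ := by
      rw [hρ]
      group
    rw [hb]
    exact mul_mem (mul_mem (inv_mem (haTm j n hn)) (hρTm j n hn)) (inv_mem (haTm j n hn))
  -- the subgroup generated by T is dense in G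
  have hkey : ∀ s₀ ∈ S ∪ S⁻¹, s₀ ∈ closure (↑(Subgroup.closure T) : Set G) := by
    rintro s₀ (hs₀ | hs₀)
    · by_cases hsH : s₀ ∈ H
      · by_cases hs1 : s₀ = 1
        · apply subset_closure
          rw [hs1]
          exact SetLike.mem_coe.mpr (one_mem _)
        · exact subset_closure (SetLike.mem_coe.mpr
            (Subgroup.subset_closure (Or.inl ⟨hs₀, hsH, hs1⟩)))
      · set j : J := ⟨s₀, hs₀, hsH⟩ with hj
        apply mem_closure_of_tendsto (haT j)
        filter_upwards [Filter.eventually_ge_atTop (N j)] with n hn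
        exact SetLike.mem_coe.mpr (haTm j n hn)
    · rw [Set.mem_inv] at hs₀
      by_cases hsH : s₀⁻¹ ∈ H
      · apply subset_closure
        by_cases hs1 : s₀⁻¹ = 1
        · have : s₀ = 1 := by rw [← inv_inv s₀, hs1, inv_one]
          rw [this]
          exact SetLike.mem_coe.mpr (one_mem _)
        · have hm : s₀⁻¹ ∈ Subgroup.closure T :=
            Subgroup.subset_closure (Or.inl ⟨hs₀, hsH, hs1⟩)
          have := inv_mem hm
          rw [inv_inv] at this
          exact SetLike.mem_coe.mpr this
      · set j : J := ⟨s₀⁻¹, hs₀, hsH⟩ with hj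
        have hbT' : Tendsto (b j) atTop (nhds s₀) := by
          have h := hbT j
          exact (show ((j : G))⁻¹ = s₀ from inv_inv s₀) ▸ h
        apply mem_closure_of_tendsto hbT'
        filter_upwards [Filter.eventually_ge_atTop (N j)] with n hn
        exact SetLike.mem_coe.mpr (hbTm j n hn)
  have hdG : closure (↑(Subgroup.closure T) : Set G) = Set.univ := by
    apply Set.eq_univ_of_univ_subset
    have hmono : (↑(Subgroup.closure S) : Set G) ⊆ closure (↑(Subgroup.closure T) : Set G) := by
      intro g hg
      rw [SetLike.mem_coe] at hg
      have hg' : g ∈ Submonoid.closure (S ∪ S⁻¹) := by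
        rw [← Subgroup.closure_toSubmonoid]
        exact hg
      refine Submonoid.closure_induction (fun z hz => hkey z hz) ?_ ?_ hg'
      · exact subset_closure (SetLike.mem_coe.mpr (one_mem _))
      · intro z w _ _ hz hw
        exact map_mem_closure₂ continuous_mul hz hw
          (fun p hp q hq => SetLike.mem_coe.mpr
            (mul_mem (SetLike.mem_coe.mp hp) (SetLike.mem_coe.mp hq)))
    calc Set.univ = closure (↑(Subgroup.closure S) : Set G) := hSdense.closure_eq.symm
      _ ⊆ closure (closure (↑(Subgroup.closure T) : Set G)) := closure_mono hmono
      _ = closure (↑(Subgroup.closure T) : Set G) := closure_closure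
  -- now assemble the suitable set in H
  refine ⟨Subtype.val ⁻¹' T, ⟨?_, ?_, ?_⟩, ?_⟩
  · -- discreteness
    apply discrete_of_sep
    intro t
    obtain ⟨W, hWo, htW, hW⟩ := hdiscT ((t : ↥H) : G) t.2
    refine ⟨Subtype.val ⁻¹' W, hWo.preimage continuous_subtype_val, htW, ?_⟩
    intro bb hbb
    exact Subtype.ext (Subtype.ext (hW _ bb.2 hbb))
  · -- closedness
    have he : (Subtype.val ⁻¹' T ∪ {1} : Set ↥H) = Subtype.val ⁻¹' (closure (T ∪ {1})) := by
      ext h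
      constructor
      · rintro (hh | hh)
        · exact subset_closure (Or.inl hh)
        · rw [Set.mem_singleton_iff] at hh
          apply subset_closure
          right
          rw [hh]
          rfl
      · intro hcl
        have hcl' : (h : G) ∈ closure T ∪ {1} := by
          have h2 : (h : G) ∈ closure T ∪ closure ({1} : Set G) := by
            rw [← closure_union]
            exact hcl
          rcases h2 with h2 | h2
          · exact Or.inl h2
          · exact Or.inr (hC h2)
        rcases hcl' with h2 | h2
        · rcases hclT _ h2 h.2 with h3 | h3
          · exact Or.inl h3
          · exact Or.inr (Set.mem_singleton_iff.mpr
              (Subtype.ext (Set.mem_singleton_iff.mp h3)))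
        · rw [Set.mem_singleton_iff] at h2
          exact Or.inr (Set.mem_singleton_iff.mpr (Subtype.ext h2))
    rw [he]
    exact isClosed_closure.preimage continuous_subtype_val
  · -- density
    intro h
    rw [Topology.IsInducing.subtypeVal.closure_eq_preimage_closure_image]
    show ((h : ↥H) : G) ∈ closure (Subtype.val ''
      (↑(Subgroup.closure (Subtype.val ⁻¹' T : Set ↥H)) : Set ↥H))
    have himg2 : (Subtype.val : ↥H → G) '' (Subtype.val ⁻¹' T) = T := by
      ext g
      constructor
      · rintro ⟨t, ht, rfl⟩
        exact ht
      · intro hg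
        exact ⟨⟨g, hTH g hg⟩, hg, rfl⟩
    have himg : (Subtype.val : ↥H → G) ''
        (↑(Subgroup.closure (Subtype.val ⁻¹' T : Set ↥H)) : Set ↥H) =
        (↑(Subgroup.closure T) : Set G) := by
      have h1 := MonoidHom.map_closure H.subtype (Subtype.val ⁻¹' T : Set ↥H)
      calc (Subtype.val : ↥H → G) ''
            (↑(Subgroup.closure (Subtype.val ⁻¹' T : Set ↥H)) : Set ↥H)
          = ↑((Subgroup.closure (Subtype.val ⁻¹' T : Set ↥H)).map H.subtype) := by
            rw [Subgroup.coe_map, Subgroup.coe_subtype]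
        _ = ↑(Subgroup.closure ((H.subtype : ↥H →* G) '' (Subtype.val ⁻¹' T))) := by rw [h1]
        _ = (↑(Subgroup.closure T) : Set G) := by
            rw [show ((H.subtype : ↥H →* G) : ↥H → G) '' (Subtype.val ⁻¹' T) = T from by
              rw [Subgroup.coe_subtype]; exact himg2]
    rw [himg, hdG]
    trivial
  · -- cardinality
    set Fc : ↥S × ℕ × Bool → G := fun p =>
      if h : (p.1 : G) ∉ H then
        (if p.2.2 then a ⟨(p.1 : G), p.1.2, h⟩ p.2.1 else ρ ⟨(p.1 : G), p.1.2, h⟩ p.2.1)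
      else (p.1 : G) with hFc
    have hrange : T ⊆ Set.range Fc := by
      rintro g (⟨hgS, hgH, _⟩ | hg)
      · refine ⟨(⟨g, hgS⟩, 0, true), ?_⟩
        simp only [hFc]
        rw [dif_neg (show ¬(g ∉ H) from fun hh => hh hgH)]
      · obtain ⟨j, hj⟩ := Set.mem_iUnion.mp hg
        rcases hj with ⟨n, _, rfl⟩ | ⟨n, _, rfl⟩
        · refine ⟨(⟨(j : G), j.2.1⟩, n, true), ?_⟩
          simp only [hFc]
          rw [dif_pos j.2.2]
          rfl
        · refine ⟨(⟨(j : G), j.2.1⟩, n, false), ?_⟩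
          simp only [hFc]
          rw [dif_pos j.2.2]
          rfl
    have e1 : Cardinal.mk ↥(Subtype.val ⁻¹' T : Set ↥H) ≤ Cardinal.mk ↥T :=
      Cardinal.mk_le_of_injective (f := fun t : ↥(Subtype.val ⁻¹' T : Set ↥H) =>
        (⟨((t : ↥H) : G), t.2⟩ : ↥T))
        (fun t₁ t₂ hh => by
          apply Subtype.ext
          apply Subtype.ext
          exact congrArg (fun z : ↥T => (z : G)) hh)
    have e2 : Cardinal.mk ↥T ≤ Cardinal.mk ↥(Set.range Fc) :=
      Cardinal.mk_le_mk_of_subset hrange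
    have e3 : Cardinal.mk ↥(Set.range Fc) ≤ Cardinal.mk (↥S × ℕ × Bool) :=
      Cardinal.mk_range_le
    have e4 : Cardinal.mk (↥S × ℕ × Bool) = Cardinal.mk ↥S * Cardinal.aleph0 := by
      rw [Cardinal.mk_prod, Cardinal.lift_uzero,
        Cardinal.mk_eq_aleph0 (ℕ × Bool), Cardinal.lift_aleph0]
    exact ((e1.trans e2).trans e3).trans_eq e4


theorem stmt12 {G : Type*} [Group G] [TopologicalSpace G] [ContinuousMul G]
    (hG : HereditarilyCollectionwiseHausdorff G)
    (S : Set G) (hS : IsSuitable S)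
    (H : Subgroup G) (hH : SeqDense (H : Set G)) :
    ∃ T : Set H, IsSuitable T ∧ Cardinal.mk T ≤ Cardinal.mk S * Cardinal.aleph0 := by
  by_cases hC : closure ({1} : Set G) ⊆ {1}
  · exact main_case hG S hS H hH hC
  · obtain ⟨c, hcC, hc1⟩ := Set.not_subset.mp hC
    exact deg_case S hS H c hcC (fun h => hc1 (Set.mem_singleton_iff.mpr h))
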